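/- Let n and x be even with n > x > 3, gcd(n,x) = 2, and x^2 ≡ 2 (mod n), and let δ = δ_{n,x}. Then for every even element 2i of Z/nZ, setting a = -2i and b = 2ix + 1, the identities δ(k + 2i) = δ^b(k) + a and δ^{2i}(k) + 1 = δ^a(k + b) hold for all k in Z/nZ. -/
import Mathlib

def delta (n x : ℕ) : ZMod n → ZMod n :=
  fun k => if Even k.val then -k else k + (x : ZMod n)

section
variable {n x : ℕ}

lemma parity_iff (hdvd : (2:ℕ) ∣ n) [NeZero n] (k : ZMod n) :
    Even k.val ↔ ZMod.castHom hdvd (ZMod 2) k = 0 := by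
  rw [ZMod.castHom_apply, ← ZMod.natCast_val, ZMod.natCast_eq_zero_iff]
  exact even_iff_two_dvd

lemma delta_even (k : ZMod n) (hk : Even k.val) : delta n x k = -k := by
  simp [delta, hk]

lemma delta_odd (k : ZMod n) (hk : ¬ Even k.val) : delta n x k = k + x := by
  simp [delta, hk]

lemma iter_even (hdvd : (2:ℕ) ∣ n) [NeZero n] (k : ZMod n) (hk : Even k.val) (m : ℕ) :
    (delta n x)^[m] k = if Even m then k else -k := by
  induction m with
  | zero => simp
  | succ m ih =>
    have hnk : Even (-k).val := by
      rw [parity_iff hdvd] at hk ⊢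
      rw [map_neg, hk, neg_zero]
    rw [Function.iterate_succ_apply', ih]
    by_cases h : Even m
    · simp [h, Nat.even_add_one, delta_even k hk]
    · simp [h, Nat.even_add_one, delta_even (-k) hnk]

lemma iter_odd (hdvd : (2:ℕ) ∣ n) [NeZero n] (hx : Even x) (k : ZMod n)
    (hk : ¬ Even k.val) (m : ℕ) :
    (delta n x)^[m] k = k + m * x := by
  induction m with
  | zero => simp
  | succ m ih =>
    have hkm : ¬ Even (k + m * x).val := by
      rw [parity_iff hdvd] at hk ⊢
      have hxz : ((x : ℕ) : ZMod 2) = 0 := by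
        rw [ZMod.natCast_eq_zero_iff]; exact even_iff_two_dvd.mp hx
      simp only [map_add, map_mul, map_natCast, hxz, mul_zero, add_zero]
      exact hk
    rw [Function.iterate_succ_apply', ih, delta_odd _ hkm]
    push_cast
    ring
end

theorem stmt_9 (n x : ℕ) (hn : Even n) (hx : Even x)
    (h3 : 3 < x) (hxn : x < n) (hg : Nat.gcd n x = 2)
    (hsq : x ^ 2 ≡ 2 [MOD n]) (i : ZMod n) :
    (∀ k : ZMod n,
      delta n x (k + 2 * i) =
        (delta n x)^[((2 * i * (x : ZMod n) + 1 : ZMod n)).val] k + (-(2 * i))) ∧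
    (∀ k : ZMod n,
      (delta n x)^[(2 * i).val] k + 1 =
        (delta n x)^[((-(2 * i) : ZMod n)).val] (k + (2 * i * (x : ZMod n) + 1))) := by
  haveI : NeZero n := ⟨by omega⟩
  have hdvd : (2:ℕ) ∣ n := even_iff_two_dvd.mp hn
  set f := ZMod.castHom hdvd (ZMod 2) with hf
  have h2 : ((2:ℕ) : ZMod 2) = 0 := by decide
  have hxz : ((x : ℕ) : ZMod 2) = 0 := by
    rw [ZMod.natCast_eq_zero_iff]; exact even_iff_two_dvd.mp hx
  have hfx : f (x : ZMod n) = 0 := by rw [map_natCast]; exact hxz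
  have hs : Even (2 * i).val := by
    rw [parity_iff hdvd]
    show f (2 * i) = 0
    rw [map_mul, map_ofNat]
    simp [show ((2:ZMod 2)) = 0 by decide]
  have hns : Even ((-(2 * i) : ZMod n)).val := by
    rw [parity_iff hdvd] at hs ⊢
    rw [map_neg, hs, neg_zero]
  have hb : ¬ Even ((2 * i * (x : ZMod n) + 1 : ZMod n)).val := by
    rw [parity_iff hdvd]
    show ¬ f (2 * i * (x : ZMod n) + 1) = 0
    rw [map_add, map_mul, hfx, mul_zero, map_one, zero_add]
    decide
  have xsq : (x : ZMod n) ^ 2 = 2 := by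
    have := (ZMod.natCast_eq_natCast_iff _ _ _).mpr hsq
    push_cast at this
    exact this
  have hcast : ∀ c : ZMod n, ((c.val : ℕ) : ZMod n) = c := fun c => by
    simp [ZMod.natCast_val, ZMod.cast_id]
  constructor
  · intro k
    by_cases hk : Even k.val
    · have hk2 : Even (k + 2 * i).val := by
        rw [parity_iff hdvd] at hk ⊢
        rw [map_add, hk, zero_add]
        show f (2 * i) = 0
        rw [map_mul, map_ofNat]
        simp [show ((2:ZMod 2)) = 0 by decide]
      rw [delta_even _ hk2, iter_even hdvd k hk, if_neg hb]
      ring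
    · have hk2 : ¬ Even (k + 2 * i).val := by
        rw [parity_iff hdvd] at hk ⊢
        rw [map_add]
        have : f (2 * i) = 0 := by
          rw [map_mul, map_ofNat]; simp [show ((2:ZMod 2)) = 0 by decide]
        rw [this, add_zero]; exact hk
      rw [delta_odd _ hk2, iter_odd hdvd hx k hk, hcast]
      linear_combination (-(2 * i)) * xsq
  · intro k
    by_cases hk : Even k.val
    · have hk2 : ¬ Even (k + (2 * i * (x : ZMod n) + 1)).val := by
        rw [parity_iff hdvd] at hk hb ⊢
        rw [map_add, hk, zero_add]; exact hb
      rw [iter_even hdvd k hk, if_pos hs, iter_odd hdvd hx _ hk2, hcast]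
      ring
    · have hk2 : Even (k + (2 * i * (x : ZMod n) + 1)).val := by
        rw [parity_iff hdvd] at hk hb ⊢
        have h01 : ∀ a : ZMod 2, ¬ a = 0 → a = 1 := by decide
        rw [map_add, h01 _ hk, h01 _ hb]
        decide
      rw [iter_odd hdvd hx k hk, hcast, iter_even hdvd _ hk2, if_pos hns]
      ring
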